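/- For every α ∈ R there are exactly six ordered pairs (x, x′) ∈ Y × Y with x − x′ = α; each such pair satisfies B(x, x′) = 0; the twelve elements of Y occurring in these six pairs are pairwise distinct; the reflection s_α exchanges x and x′ in each of the six pairs and fixes each of the remaining 15 elements of Y. -/

import Mathlib

open scoped TensorProduct

/-- The lattice `L = ℤ⁷` with standard basis `ℓ, e₁, …, e₆`. -/
abbrev L : Type := Fin 7 → ℤ

/-- The symmetric bilinear form `B(x,y) = x₀y₀ − x₁y₁ − ⋯ − x₆y₆`. -/
def B (x y : L) : ℤ :=
  x 0 * y 0 - (x 1 * y 1 + x 2 * y 2 + x 3 * y 3 + x 4 * y 4 + x 5 * y 5 + x 6 * y 6)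

/-- `h = 3ℓ − e₁ − ⋯ − e₆`, the hyperplane class, with `B(h,h) = 3`. -/
def hv : L := ![3, -1, -1, -1, -1, -1, -1]

/-- The set of lines: `Y = {y ∈ L : B(h,y) = 1 ∧ B(y,y) = −1}`. -/
def Yset : Set L := {y | B hv y = 1 ∧ B y y = -1}

/-- The set of roots: `R = {α ∈ L : B(h,α) = 0 ∧ B(α,α) = −2}`. -/
def Rset : Set L := {a | B hv a = 0 ∧ B a a = -2}

/-- The reflection `s_α(x) = x + B(x,α)·α` as a plain function. -/
def sfun (α : L) (x : L) : L := x + B x α • α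

/-- The ordered pairs `(x, x′)` of lines with difference `α`. -/
def linePairs (α : L) : Set (L × L) := {p | p.1 ∈ Yset ∧ p.2 ∈ Yset ∧ p.1 - p.2 = α}


lemma B_lit (a b c d e f g : ℤ) (y : L) :
    B ![a,b,c,d,e,f,g] y = a * y 0 - (b * y 1 + c * y 2 + d * y 3 + e * y 4 + f * y 5 + g * y 6) := rfl

lemma B_sub_left (x y z : L) : B (x - y) z = B x z - B y z := by
  simp only [B, Pi.sub_apply]; ring

lemma B_add_left (x y z : L) : B (x + y) z = B x z + B y z := by
  simp only [B, Pi.add_apply]; ring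

lemma B_sub_right (x y z : L) : B x (y - z) = B x y - B x z := by
  simp only [B, Pi.sub_apply]; ring

lemma B_add_right (x y z : L) : B x (y + z) = B x y + B x z := by
  simp only [B, Pi.add_apply]; ring

lemma B_comm (x y : L) : B x y = B y x := by
  simp only [B]; ring

lemma int_le_mul_self (t : ℤ) : t ≤ t * t := by
  rcases le_or_gt t 0 with h | h
  · exact le_trans h (mul_self_nonneg t)
  · nlinarith

lemma int_neg_le_mul_self (t : ℤ) : -t ≤ t * t := by
  have h := int_le_mul_self (-t); simpa using h

lemma mul_self_eq_self (t : ℤ) (h : t * t = t) : t = 0 ∨ t = 1 := by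
  have h2 : t * (t - 1) = 0 := by linear_combination h
  rcases mul_eq_zero.mp h2 with h3 | h3
  · exact Or.inl h3
  · right; linarith

lemma mul_self_eq_neg_self (t : ℤ) (h : t * t = -t) : t = 0 ∨ t = -1 := by
  have h2 : t * (t + 1) = 0 := by linear_combination h
  rcases mul_eq_zero.mp h2 with h3 | h3
  · exact Or.inl h3
  · right; linarith

lemma trich (t : ℤ) (h : (t * t) * (t * t) = t * t) : t = -1 ∨ t = 0 ∨ t = 1 := by
  rcases mul_self_eq_self _ h with h1 | h1
  · right; left; exact mul_self_eq_zero.mp h1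
  · rcases Int.isUnit_iff.mp (IsUnit.of_mul_eq_one (a := t) t h1) with h2 | h2
    · right; right; exact h2
    · left; exact h2

lemma ind_neg (t : ℤ) (h : t = -1 ∨ t = 0 ∨ t = 1) :
    2 * (if t = -1 then (1:ℤ) else 0) = t * t - t := by
  rcases h with rfl | rfl | rfl <;> norm_num

lemma ind_zero (t : ℤ) (h : t = -1 ∨ t = 0 ∨ t = 1) :
    (if t = 0 then (1:ℤ) else 0) = 1 - t * t := by
  rcases h with rfl | rfl | rfl <;> norm_num

lemma eq_vec_of_coords {a b c d e f g : ℤ} (y : L) (h0 : y 0 = a) (h1 : y 1 = b)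
    (h2 : y 2 = c) (h3 : y 3 = d) (h4 : y 4 = e) (h5 : y 5 = f) (h6 : y 6 = g) :
    y = ![a,b,c,d,e,f,g] := by
  funext i; fin_cases i
  exacts [h0, h1, h2, h3, h4, h5, h6]

lemma smul_zero_of (c : ℤ) (α : L) (hc : c • α = 0) (hα : α ≠ 0) : c = 0 := by
  obtain ⟨j, hj⟩ := Function.ne_iff.mp hα
  have h := congrFun hc j
  simp only [Pi.smul_apply, smul_eq_mul, Pi.zero_apply] at h
  rcases mul_eq_zero.mp h with h1 | h1
  · exact h1
  · exact absurd h1 (by simpa using hj)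

set_option maxHeartbeats 1000000

def ylist : List L := [![(0:ℤ),1,0,0,0,0,0], ![(0:ℤ),0,1,0,0,0,0], ![(0:ℤ),0,0,1,0,0,0], ![(0:ℤ),0,0,0,1,0,0], ![(0:ℤ),0,0,0,0,1,0], ![(0:ℤ),0,0,0,0,0,1], ![(1:ℤ),-1,-1,0,0,0,0], ![(1:ℤ),-1,0,-1,0,0,0], ![(1:ℤ),-1,0,0,-1,0,0], ![(1:ℤ),-1,0,0,0,-1,0], ![(1:ℤ),-1,0,0,0,0,-1], ![(1:ℤ),0,-1,-1,0,0,0], ![(1:ℤ),0,-1,0,-1,0,0], ![(1:ℤ),0,-1,0,0,-1,0], ![(1:ℤ),0,-1,0,0,0,-1], ![(1:ℤ),0,0,-1,-1,0,0], ![(1:ℤ),0,0,-1,0,-1,0], ![(1:ℤ),0,0,-1,0,0,-1], ![(1:ℤ),0,0,0,-1,-1,0], ![(1:ℤ),0,0,0,-1,0,-1], ![(1:ℤ),0,0,0,0,-1,-1], ![(2:ℤ),0,-1,-1,-1,-1,-1], ![(2:ℤ),-1,0,-1,-1,-1,-1], ![(2:ℤ),-1,-1,0,-1,-1,-1], ![(2:ℤ),-1,-1,-1,0,-1,-1],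 ![(2:ℤ),-1,-1,-1,-1,0,-1], ![(2:ℤ),-1,-1,-1,-1,-1,0]]

lemma magic (t1 t2 t3 t4 t5 t6 t7 t8 t9 t10 t11 t12 t13 t14 t15 t16 t17 t18 t19 t20 t21 t22 t23 t24 t25 t26 t27 : ℤ)
    (h1 : t1 + t2 + t3 + t4 + t5 + t6 + t7 + t8 + t9 + t10 + t11 + t12 + t13 + t14 + t15 + t16 + t17 + t18 + t19 + t20 + t21 + t22 + t23 + t24 + t25 + t26 + t27 = 0)
    (h2 : t1 * t1 + t2 * t2 + t3 * t3 + t4 * t4 + t5 * t5 + t6 * t6 + t7 * t7 + t8 * t8 + t9 * t9 + t10 * t10 + t11 * t11 + t12 * t12 + t13 * t13 + t14 * t14 + t15 * t15 + t16 * t16 + t17 * t17 + t18 * t18 + t19 * t19 + t20 * t20 + t21 * t21 + t22 * t22 + t23 * t23 + t24 * t24 + t25 * t25 + t26 * t26 + t27 * t27 = 12)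
    (h4 : (t1 * t1) * (t1 * t1) + (t2 * t2) * (t2 * t2) + (t3 * t3) * (t3 * t3) + (t4 * t4) * (t4 * t4) + (t5 * t5) * (t5 * t5) + (t6 * t6) * (t6 * t6) + (t7 * t7) * (t7 * t7) + (t8 * t8) * (t8 * t8) + (t9 * t9) * (t9 * t9) + (t10 * t10) * (t10 * t10) + (t11 * t11) * (t11 * t11) + (t12 * t12) * (t12 * t12) + (t13 * t13) * (t13 * t13) + (t14 * t14) * (t14 * t14) + (t15 * t15) * (t15 * t15) + (t16 * t16) * (t16 * t16) + (t17 * t17) * (t17 * t17) + (t18 * t18) * (t18 * t18) + (t19 * t19) * (t19 * t19) + (t20 * t20) * (t20 * t20) + (t21 * t21) * (t21 * t21) + (t22 * t22) * (t22 * t22) + (t23 * t23) * (t23 * t23) + (t24 * t24) * (t24 * t24) + (t25 * t25) * (t25 * t25) + (t26 * t26) * (t26 * t26) + (t27 * t27) * (t27 * t27) = 12) :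
    ((t1 = -1 ∨ t1 = 0 ∨ t1 = 1) ∧ (t2 = -1 ∨ t2 = 0 ∨ t2 = 1) ∧ (t3 = -1 ∨ t3 = 0 ∨ t3 = 1) ∧ (t4 = -1 ∨ t4 = 0 ∨ t4 = 1) ∧ (t5 = -1 ∨ t5 = 0 ∨ t5 = 1) ∧ (t6 = -1 ∨ t6 = 0 ∨ t6 = 1) ∧ (t7 = -1 ∨ t7 = 0 ∨ t7 = 1) ∧ (t8 = -1 ∨ t8 = 0 ∨ t8 = 1) ∧ (t9 = -1 ∨ t9 = 0 ∨ t9 = 1) ∧ (t10 = -1 ∨ t10 = 0 ∨ t10 = 1) ∧ (t11 = -1 ∨ t11 = 0 ∨ t11 = 1) ∧ (t12 = -1 ∨ t12 = 0 ∨ t12 = 1) ∧ (t13 = -1 ∨ t13 = 0 ∨ t13 = 1) ∧ (t14 = -1 ∨ t14 = 0 ∨ t14 = 1) ∧ (t15 = -1 ∨ t15 = 0 ∨ t15 = 1) ∧ (t16 = -1 ∨ t16 = 0 ∨ t16 = 1) ∧ (t17 = -1 ∨ t17 = 0 ∨ t17 = 1) ∧ (t18 = -1 ∨ t18 = 0 ∨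 t18 = 1) ∧ (t19 = -1 ∨ t19 = 0 ∨ t19 = 1) ∧ (t20 = -1 ∨ t20 = 0 ∨ t20 = 1) ∧ (t21 = -1 ∨ t21 = 0 ∨ t21 = 1) ∧ (t22 = -1 ∨ t22 = 0 ∨ t22 = 1) ∧ (t23 = -1 ∨ t23 = 0 ∨ t23 = 1) ∧ (t24 = -1 ∨ t24 = 0 ∨ t24 = 1) ∧ (t25 = -1 ∨ t25 = 0 ∨ t25 = 1) ∧ (t26 = -1 ∨ t26 = 0 ∨ t26 = 1) ∧ (t27 = -1 ∨ t27 = 0 ∨ t27 = 1)) ∧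
    (if t1 = -1 then (1:ℤ) else 0) + (if t2 = -1 then (1:ℤ) else 0) + (if t3 = -1 then (1:ℤ) else 0) + (if t4 = -1 then (1:ℤ) else 0) + (if t5 = -1 then (1:ℤ) else 0) + (if t6 = -1 then (1:ℤ) else 0) + (if t7 = -1 then (1:ℤ) else 0) + (if t8 = -1 then (1:ℤ) else 0) + (if t9 = -1 then (1:ℤ) else 0) + (if t10 = -1 then (1:ℤ) else 0) + (if t11 = -1 then (1:ℤ) else 0) + (if t12 = -1 then (1:ℤ) else 0) + (if t13 = -1 then (1:ℤ) else 0) + (if t14 = -1 then (1:ℤ) else 0) + (if t15 = -1 then (1:ℤ) else 0) + (if t16 = -1 then (1:ℤ) else 0) + (if t17 = -1 then (1:ℤ) else 0) + (if t18 = -1 then (1:ℤ) else 0) + (if t19 = -1 then (1:ℤ) else 0) + (if t20 = -1 then (1:ℤ) else 0) + (if t21 = -1 then (1:ℤ) else 0) + (if t22 = -1 then (1:ℤ) else 0) + (if t23 = -1 then (1:ℤ) else 0) + (if t24 = -1 then (1:ℤ) else 0) + (if t25 = -1 then (1:ℤ) else 0) + (if t26 = -1 then (1:ℤ) else 0) +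 (if t27 = -1 then (1:ℤ) else 0) = 6 ∧
    (if t1 = 0 then (1:ℤ) else 0) + (if t2 = 0 then (1:ℤ) else 0) + (if t3 = 0 then (1:ℤ) else 0) + (if t4 = 0 then (1:ℤ) else 0) + (if t5 = 0 then (1:ℤ) else 0) + (if t6 = 0 then (1:ℤ) else 0) + (if t7 = 0 then (1:ℤ) else 0) + (if t8 = 0 then (1:ℤ) else 0) + (if t9 = 0 then (1:ℤ) else 0) + (if t10 = 0 then (1:ℤ) else 0) + (if t11 = 0 then (1:ℤ) else 0) + (if t12 = 0 then (1:ℤ) else 0) + (if t13 = 0 then (1:ℤ) else 0) + (if t14 = 0 then (1:ℤ) else 0) + (if t15 = 0 then (1:ℤ) else 0) + (if t16 = 0 then (1:ℤ) else 0) + (if t17 = 0 then (1:ℤ) else 0) + (if t18 = 0 then (1:ℤ) else 0) + (if t19 = 0 then (1:ℤ) else 0) + (if t20 = 0 then (1:ℤ) else 0) + (if t21 = 0 then (1:ℤ) else 0) + (if t22 = 0 then (1:ℤ) else 0) + (if t23 = 0 then (1:ℤ) else 0) + (if t24 = 0 then (1:ℤ) else 0) + (if t25 = 0 then (1:ℤ)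 else 0) + (if t26 = 0 then (1:ℤ) else 0) + (if t27 = 0 then (1:ℤ) else 0) = 15 := by
  have q1 : (t1 * t1) * (t1 * t1) = t1 * t1 := by linarith [int_le_mul_self (t1 * t1), int_le_mul_self (t2 * t2), int_le_mul_self (t3 * t3), int_le_mul_self (t4 * t4), int_le_mul_self (t5 * t5), int_le_mul_self (t6 * t6), int_le_mul_self (t7 * t7), int_le_mul_self (t8 * t8), int_le_mul_self (t9 * t9), int_le_mul_self (t10 * t10), int_le_mul_self (t11 * t11), int_le_mul_self (t12 * t12), int_le_mul_self (t13 * t13), int_le_mul_self (t14 * t14), int_le_mul_self (t15 * t15), int_le_mul_self (t16 * t16), int_le_mul_self (t17 * t17), int_le_mul_self (t18 * t18), int_le_mul_self (t19 * t19), int_le_mul_self (t20 * t20), int_le_mul_self (t21 * t21), int_le_mul_self (t22 * t22), int_le_mul_self (t23 * t23), int_le_mul_self (t24 * t24), int_le_mul_self (t25 * t25), int_le_mul_self (t26 * t26), int_le_mul_self (t27 * t27)]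
  have q2 : (t2 * t2) * (t2 * t2) = t2 * t2 := by linarith [int_le_mul_self (t1 * t1), int_le_mul_self (t2 * t2), int_le_mul_self (t3 * t3), int_le_mul_self (t4 * t4), int_le_mul_self (t5 * t5), int_le_mul_self (t6 * t6), int_le_mul_self (t7 * t7), int_le_mul_self (t8 * t8), int_le_mul_self (t9 * t9), int_le_mul_self (t10 * t10), int_le_mul_self (t11 * t11), int_le_mul_self (t12 * t12), int_le_mul_self (t13 * t13), int_le_mul_self (t14 * t14), int_le_mul_self (t15 * t15), int_le_mul_self (t16 * t16), int_le_mul_self (t17 * t17), int_le_mul_self (t18 * t18), int_le_mul_self (t19 * t19), int_le_mul_self (t20 * t20), int_le_mul_self (t21 * t21), int_le_mul_self (t22 * t22), int_le_mul_self (t23 * t23), int_le_mul_self (t24 * t24), int_le_mul_self (t25 * t25), int_le_mul_self (t26 * t26), int_le_mul_self (t27 * t27)]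
  have q3 : (t3 * t3) * (t3 * t3) = t3 * t3 := by linarith [int_le_mul_self (t1 * t1), int_le_mul_self (t2 * t2), int_le_mul_self (t3 * t3), int_le_mul_self (t4 * t4), int_le_mul_self (t5 * t5), int_le_mul_self (t6 * t6), int_le_mul_self (t7 * t7), int_le_mul_self (t8 * t8), int_le_mul_self (t9 * t9), int_le_mul_self (t10 * t10), int_le_mul_self (t11 * t11), int_le_mul_self (t12 * t12), int_le_mul_self (t13 * t13), int_le_mul_self (t14 * t14), int_le_mul_self (t15 * t15), int_le_mul_self (t16 * t16), int_le_mul_self (t17 * t17), int_le_mul_self (t18 * t18), int_le_mul_self (t19 * t19), int_le_mul_self (t20 * t20), int_le_mul_self (t21 * t21), int_le_mul_self (t22 * t22), int_le_mul_self (t23 * t23), int_le_mul_self (t24 * t24), int_le_mul_self (t25 * t25), int_le_mul_self (t26 * t26), int_le_mul_self (t27 * t27)]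
  have q4 : (t4 * t4) * (t4 * t4) = t4 * t4 := by linarith [int_le_mul_self (t1 * t1), int_le_mul_self (t2 * t2), int_le_mul_self (t3 * t3), int_le_mul_self (t4 * t4), int_le_mul_self (t5 * t5), int_le_mul_self (t6 * t6), int_le_mul_self (t7 * t7), int_le_mul_self (t8 * t8), int_le_mul_self (t9 * t9), int_le_mul_self (t10 * t10), int_le_mul_self (t11 * t11), int_le_mul_self (t12 * t12), int_le_mul_self (t13 * t13), int_le_mul_self (t14 * t14), int_le_mul_self (t15 * t15), int_le_mul_self (t16 * t16), int_le_mul_self (t17 * t17), int_le_mul_self (t18 * t18), int_le_mul_self (t19 * t19), int_le_mul_self (t20 * t20), int_le_mul_self (t21 * t21), int_le_mul_self (t22 * t22), int_le_mul_self (t23 * t23), int_le_mul_self (t24 * t24), int_le_mul_self (t25 * t25), int_le_mul_self (t26 * t26), int_le_mul_self (t27 * t27)]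
  have q5 : (t5 * t5) * (t5 * t5) = t5 * t5 := by linarith [int_le_mul_self (t1 * t1), int_le_mul_self (t2 * t2), int_le_mul_self (t3 * t3), int_le_mul_self (t4 * t4), int_le_mul_self (t5 * t5), int_le_mul_self (t6 * t6), int_le_mul_self (t7 * t7), int_le_mul_self (t8 * t8), int_le_mul_self (t9 * t9), int_le_mul_self (t10 * t10), int_le_mul_self (t11 * t11), int_le_mul_self (t12 * t12), int_le_mul_self (t13 * t13), int_le_mul_self (t14 * t14), int_le_mul_self (t15 * t15), int_le_mul_self (t16 * t16), int_le_mul_self (t17 * t17), int_le_mul_self (t18 * t18), int_le_mul_self (t19 * t19), int_le_mul_self (t20 * t20), int_le_mul_self (t21 * t21), int_le_mul_self (t22 * t22), int_le_mul_self (t23 * t23), int_le_mul_self (t24 * t24), int_le_mul_self (t25 * t25), int_le_mul_self (t26 * t26), int_le_mul_self (t27 * t27)]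
  have q6 : (t6 * t6) * (t6 * t6) = t6 * t6 := by linarith [int_le_mul_self (t1 * t1), int_le_mul_self (t2 * t2), int_le_mul_self (t3 * t3), int_le_mul_self (t4 * t4), int_le_mul_self (t5 * t5), int_le_mul_self (t6 * t6), int_le_mul_self (t7 * t7), int_le_mul_self (t8 * t8), int_le_mul_self (t9 * t9), int_le_mul_self (t10 * t10), int_le_mul_self (t11 * t11), int_le_mul_self (t12 * t12), int_le_mul_self (t13 * t13), int_le_mul_self (t14 * t14), int_le_mul_self (t15 * t15), int_le_mul_self (t16 * t16), int_le_mul_self (t17 * t17), int_le_mul_self (t18 * t18), int_le_mul_self (t19 * t19), int_le_mul_self (t20 * t20), int_le_mul_self (t21 * t21), int_le_mul_self (t22 * t22), int_le_mul_self (t23 * t23), int_le_mul_self (t24 * t24), int_le_mul_self (t25 * t25), int_le_mul_self (t26 * t26), int_le_mul_self (t27 * t27)]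
  have q7 : (t7 * t7) * (t7 * t7) = t7 * t7 := by linarith [int_le_mul_self (t1 * t1), int_le_mul_self (t2 * t2), int_le_mul_self (t3 * t3), int_le_mul_self (t4 * t4), int_le_mul_self (t5 * t5), int_le_mul_self (t6 * t6), int_le_mul_self (t7 * t7), int_le_mul_self (t8 * t8), int_le_mul_self (t9 * t9), int_le_mul_self (t10 * t10), int_le_mul_self (t11 * t11), int_le_mul_self (t12 * t12), int_le_mul_self (t13 * t13), int_le_mul_self (t14 * t14), int_le_mul_self (t15 * t15), int_le_mul_self (t16 * t16), int_le_mul_self (t17 * t17), int_le_mul_self (t18 * t18), int_le_mul_self (t19 * t19), int_le_mul_self (t20 * t20), int_le_mul_self (t21 * t21), int_le_mul_self (t22 * t22), int_le_mul_self (t23 * t23), int_le_mul_self (t24 * t24), int_le_mul_self (t25 * t25), int_le_mul_self (t26 * t26), int_le_mul_self (t27 * t27)]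
  have q8 : (t8 * t8) * (t8 * t8) = t8 * t8 := by linarith [int_le_mul_self (t1 * t1), int_le_mul_self (t2 * t2), int_le_mul_self (t3 * t3), int_le_mul_self (t4 * t4), int_le_mul_self (t5 * t5), int_le_mul_self (t6 * t6), int_le_mul_self (t7 * t7), int_le_mul_self (t8 * t8), int_le_mul_self (t9 * t9), int_le_mul_self (t10 * t10), int_le_mul_self (t11 * t11), int_le_mul_self (t12 * t12), int_le_mul_self (t13 * t13), int_le_mul_self (t14 * t14), int_le_mul_self (t15 * t15), int_le_mul_self (t16 * t16), int_le_mul_self (t17 * t17), int_le_mul_self (t18 * t18), int_le_mul_self (t19 * t19), int_le_mul_self (t20 * t20), int_le_mul_self (t21 * t21), int_le_mul_self (t22 * t22), int_le_mul_self (t23 * t23), int_le_mul_self (t24 * t24), int_le_mul_self (t25 * t25), int_le_mul_self (t26 * t26), int_le_mul_self (t27 * t27)]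
  have q9 : (t9 * t9) * (t9 * t9) = t9 * t9 := by linarith [int_le_mul_self (t1 * t1), int_le_mul_self (t2 * t2), int_le_mul_self (t3 * t3), int_le_mul_self (t4 * t4), int_le_mul_self (t5 * t5), int_le_mul_self (t6 * t6), int_le_mul_self (t7 * t7), int_le_mul_self (t8 * t8), int_le_mul_self (t9 * t9), int_le_mul_self (t10 * t10), int_le_mul_self (t11 * t11), int_le_mul_self (t12 * t12), int_le_mul_self (t13 * t13), int_le_mul_self (t14 * t14), int_le_mul_self (t15 * t15), int_le_mul_self (t16 * t16), int_le_mul_self (t17 * t17), int_le_mul_self (t18 * t18), int_le_mul_self (t19 * t19), int_le_mul_self (t20 * t20), int_le_mul_self (t21 * t21), int_le_mul_self (t22 * t22), int_le_mul_self (t23 * t23), int_le_mul_self (t24 * t24), int_le_mul_self (t25 * t25), int_le_mul_self (t26 * t26), int_le_mul_self (t27 * t27)]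
  have q10 : (t10 * t10) * (t10 * t10) = t10 * t10 := by linarith [int_le_mul_self (t1 * t1), int_le_mul_self (t2 * t2), int_le_mul_self (t3 * t3), int_le_mul_self (t4 * t4), int_le_mul_self (t5 * t5), int_le_mul_self (t6 * t6), int_le_mul_self (t7 * t7), int_le_mul_self (t8 * t8), int_le_mul_self (t9 * t9), int_le_mul_self (t10 * t10), int_le_mul_self (t11 * t11), int_le_mul_self (t12 * t12), int_le_mul_self (t13 * t13), int_le_mul_self (t14 * t14), int_le_mul_self (t15 * t15), int_le_mul_self (t16 * t16), int_le_mul_self (t17 * t17), int_le_mul_self (t18 * t18), int_le_mul_self (t19 * t19), int_le_mul_self (t20 * t20), int_le_mul_self (t21 * t21), int_le_mul_self (t22 * t22), int_le_mul_self (t23 * t23), int_le_mul_self (t24 * t24), int_le_mul_self (t25 * t25), int_le_mul_self (t26 * t26), int_le_mul_self (t27 * t27)]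
  have q11 : (t11 * t11) * (t11 * t11) = t11 * t11 := by linarith [int_le_mul_self (t1 * t1), int_le_mul_self (t2 * t2), int_le_mul_self (t3 * t3), int_le_mul_self (t4 * t4), int_le_mul_self (t5 * t5), int_le_mul_self (t6 * t6), int_le_mul_self (t7 * t7), int_le_mul_self (t8 * t8), int_le_mul_self (t9 * t9), int_le_mul_self (t10 * t10), int_le_mul_self (t11 * t11), int_le_mul_self (t12 * t12), int_le_mul_self (t13 * t13), int_le_mul_self (t14 * t14), int_le_mul_self (t15 * t15), int_le_mul_self (t16 * t16), int_le_mul_self (t17 * t17), int_le_mul_self (t18 * t18), int_le_mul_self (t19 * t19), int_le_mul_self (t20 * t20), int_le_mul_self (t21 * t21), int_le_mul_self (t22 * t22), int_le_mul_self (t23 * t23), int_le_mul_self (t24 * t24), int_le_mul_self (t25 * t25), int_le_mul_self (t26 * t26), int_le_mul_self (t27 * t27)]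
  have q12 : (t12 * t12) * (t12 * t12) = t12 * t12 := by linarith [int_le_mul_self (t1 * t1), int_le_mul_self (t2 * t2), int_le_mul_self (t3 * t3), int_le_mul_self (t4 * t4), int_le_mul_self (t5 * t5), int_le_mul_self (t6 * t6), int_le_mul_self (t7 * t7), int_le_mul_self (t8 * t8), int_le_mul_self (t9 * t9), int_le_mul_self (t10 * t10), int_le_mul_self (t11 * t11), int_le_mul_self (t12 * t12), int_le_mul_self (t13 * t13), int_le_mul_self (t14 * t14), int_le_mul_self (t15 * t15), int_le_mul_self (t16 * t16), int_le_mul_self (t17 * t17), int_le_mul_self (t18 * t18), int_le_mul_self (t19 * t19), int_le_mul_self (t20 * t20), int_le_mul_self (t21 * t21), int_le_mul_self (t22 * t22), int_le_mul_self (t23 * t23), int_le_mul_self (t24 * t24), int_le_mul_self (t25 * t25), int_le_mul_self (t26 * t26), int_le_mul_self (t27 * t27)]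
  have q13 : (t13 * t13) * (t13 * t13) = t13 * t13 := by linarith [int_le_mul_self (t1 * t1), int_le_mul_self (t2 * t2), int_le_mul_self (t3 * t3), int_le_mul_self (t4 * t4), int_le_mul_self (t5 * t5), int_le_mul_self (t6 * t6), int_le_mul_self (t7 * t7), int_le_mul_self (t8 * t8), int_le_mul_self (t9 * t9), int_le_mul_self (t10 * t10), int_le_mul_self (t11 * t11), int_le_mul_self (t12 * t12), int_le_mul_self (t13 * t13), int_le_mul_self (t14 * t14), int_le_mul_self (t15 * t15), int_le_mul_self (t16 * t16), int_le_mul_self (t17 * t17), int_le_mul_self (t18 * t18), int_le_mul_self (t19 * t19), int_le_mul_self (t20 * t20), int_le_mul_self (t21 * t21), int_le_mul_self (t22 * t22), int_le_mul_self (t23 * t23), int_le_mul_self (t24 * t24), int_le_mul_self (t25 * t25), int_le_mul_self (t26 * t26), int_le_mul_self (t27 * t27)]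
  have q14 : (t14 * t14) * (t14 * t14) = t14 * t14 := by linarith [int_le_mul_self (t1 * t1), int_le_mul_self (t2 * t2), int_le_mul_self (t3 * t3), int_le_mul_self (t4 * t4), int_le_mul_self (t5 * t5), int_le_mul_self (t6 * t6), int_le_mul_self (t7 * t7), int_le_mul_self (t8 * t8), int_le_mul_self (t9 * t9), int_le_mul_self (t10 * t10), int_le_mul_self (t11 * t11), int_le_mul_self (t12 * t12), int_le_mul_self (t13 * t13), int_le_mul_self (t14 * t14), int_le_mul_self (t15 * t15), int_le_mul_self (t16 * t16), int_le_mul_self (t17 * t17), int_le_mul_self (t18 * t18), int_le_mul_self (t19 * t19), int_le_mul_self (t20 * t20), int_le_mul_self (t21 * t21), int_le_mul_self (t22 * t22), int_le_mul_self (t23 * t23), int_le_mul_self (t24 * t24), int_le_mul_self (t25 * t25), int_le_mul_self (t26 * t26), int_le_mul_self (t27 * t27)]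
  have q15 : (t15 * t15) * (t15 * t15) = t15 * t15 := by linarith [int_le_mul_self (t1 * t1), int_le_mul_self (t2 * t2), int_le_mul_self (t3 * t3), int_le_mul_self (t4 * t4), int_le_mul_self (t5 * t5), int_le_mul_self (t6 * t6), int_le_mul_self (t7 * t7), int_le_mul_self (t8 * t8), int_le_mul_self (t9 * t9), int_le_mul_self (t10 * t10), int_le_mul_self (t11 * t11), int_le_mul_self (t12 * t12), int_le_mul_self (t13 * t13), int_le_mul_self (t14 * t14), int_le_mul_self (t15 * t15), int_le_mul_self (t16 * t16), int_le_mul_self (t17 * t17), int_le_mul_self (t18 * t18), int_le_mul_self (t19 * t19), int_le_mul_self (t20 * t20), int_le_mul_self (t21 * t21), int_le_mul_self (t22 * t22), int_le_mul_self (t23 * t23), int_le_mul_self (t24 * t24), int_le_mul_self (t25 * t25), int_le_mul_self (t26 * t26), int_le_mul_self (t27 * t27)]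
  have q16 : (t16 * t16) * (t16 * t16) = t16 * t16 := by linarith [int_le_mul_self (t1 * t1), int_le_mul_self (t2 * t2), int_le_mul_self (t3 * t3), int_le_mul_self (t4 * t4), int_le_mul_self (t5 * t5), int_le_mul_self (t6 * t6), int_le_mul_self (t7 * t7), int_le_mul_self (t8 * t8), int_le_mul_self (t9 * t9), int_le_mul_self (t10 * t10), int_le_mul_self (t11 * t11), int_le_mul_self (t12 * t12), int_le_mul_self (t13 * t13), int_le_mul_self (t14 * t14), int_le_mul_self (t15 * t15), int_le_mul_self (t16 * t16), int_le_mul_self (t17 * t17), int_le_mul_self (t18 * t18), int_le_mul_self (t19 * t19), int_le_mul_self (t20 * t20), int_le_mul_self (t21 * t21), int_le_mul_self (t22 * t22), int_le_mul_self (t23 * t23), int_le_mul_self (t24 * t24), int_le_mul_self (t25 * t25), int_le_mul_self (t26 * t26), int_le_mul_self (t27 * t27)]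
  have q17 : (t17 * t17) * (t17 * t17) = t17 * t17 := by linarith [int_le_mul_self (t1 * t1), int_le_mul_self (t2 * t2), int_le_mul_self (t3 * t3), int_le_mul_self (t4 * t4), int_le_mul_self (t5 * t5), int_le_mul_self (t6 * t6), int_le_mul_self (t7 * t7), int_le_mul_self (t8 * t8), int_le_mul_self (t9 * t9), int_le_mul_self (t10 * t10), int_le_mul_self (t11 * t11), int_le_mul_self (t12 * t12), int_le_mul_self (t13 * t13), int_le_mul_self (t14 * t14), int_le_mul_self (t15 * t15), int_le_mul_self (t16 * t16), int_le_mul_self (t17 * t17), int_le_mul_self (t18 * t18), int_le_mul_self (t19 * t19), int_le_mul_self (t20 * t20), int_le_mul_self (t21 * t21), int_le_mul_self (t22 * t22), int_le_mul_self (t23 * t23), int_le_mul_self (t24 * t24), int_le_mul_self (t25 * t25), int_le_mul_self (t26 * t26), int_le_mul_self (t27 * t27)]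
  have q18 : (t18 * t18) * (t18 * t18) = t18 * t18 := by linarith [int_le_mul_self (t1 * t1), int_le_mul_self (t2 * t2), int_le_mul_self (t3 * t3), int_le_mul_self (t4 * t4), int_le_mul_self (t5 * t5), int_le_mul_self (t6 * t6), int_le_mul_self (t7 * t7), int_le_mul_self (t8 * t8), int_le_mul_self (t9 * t9), int_le_mul_self (t10 * t10), int_le_mul_self (t11 * t11), int_le_mul_self (t12 * t12), int_le_mul_self (t13 * t13), int_le_mul_self (t14 * t14), int_le_mul_self (t15 * t15), int_le_mul_self (t16 * t16), int_le_mul_self (t17 * t17), int_le_mul_self (t18 * t18), int_le_mul_self (t19 * t19), int_le_mul_self (t20 * t20), int_le_mul_self (t21 * t21), int_le_mul_self (t22 * t22), int_le_mul_self (t23 * t23), int_le_mul_self (t24 * t24), int_le_mul_self (t25 * t25), int_le_mul_self (t26 * t26), int_le_mul_self (t27 * t27)]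
  have q19 : (t19 * t19) * (t19 * t19) = t19 * t19 := by linarith [int_le_mul_self (t1 * t1), int_le_mul_self (t2 * t2), int_le_mul_self (t3 * t3), int_le_mul_self (t4 * t4), int_le_mul_self (t5 * t5), int_le_mul_self (t6 * t6), int_le_mul_self (t7 * t7), int_le_mul_self (t8 * t8), int_le_mul_self (t9 * t9), int_le_mul_self (t10 * t10), int_le_mul_self (t11 * t11), int_le_mul_self (t12 * t12), int_le_mul_self (t13 * t13), int_le_mul_self (t14 * t14), int_le_mul_self (t15 * t15), int_le_mul_self (t16 * t16), int_le_mul_self (t17 * t17), int_le_mul_self (t18 * t18), int_le_mul_self (t19 * t19), int_le_mul_self (t20 * t20), int_le_mul_self (t21 * t21), int_le_mul_self (t22 * t22), int_le_mul_self (t23 * t23), int_le_mul_self (t24 * t24), int_le_mul_self (t25 * t25), int_le_mul_self (t26 * t26), int_le_mul_self (t27 * t27)]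
  have q20 : (t20 * t20) * (t20 * t20) = t20 * t20 := by linarith [int_le_mul_self (t1 * t1), int_le_mul_self (t2 * t2), int_le_mul_self (t3 * t3), int_le_mul_self (t4 * t4), int_le_mul_self (t5 * t5), int_le_mul_self (t6 * t6), int_le_mul_self (t7 * t7), int_le_mul_self (t8 * t8), int_le_mul_self (t9 * t9), int_le_mul_self (t10 * t10), int_le_mul_self (t11 * t11), int_le_mul_self (t12 * t12), int_le_mul_self (t13 * t13), int_le_mul_self (t14 * t14), int_le_mul_self (t15 * t15), int_le_mul_self (t16 * t16), int_le_mul_self (t17 * t17), int_le_mul_self (t18 * t18), int_le_mul_self (t19 * t19), int_le_mul_self (t20 * t20), int_le_mul_self (t21 * t21), int_le_mul_self (t22 * t22), int_le_mul_self (t23 * t23), int_le_mul_self (t24 * t24), int_le_mul_self (t25 * t25), int_le_mul_self (t26 * t26), int_le_mul_self (t27 * t27)]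
  have q21 : (t21 * t21) * (t21 * t21) = t21 * t21 := by linarith [int_le_mul_self (t1 * t1), int_le_mul_self (t2 * t2), int_le_mul_self (t3 * t3), int_le_mul_self (t4 * t4), int_le_mul_self (t5 * t5), int_le_mul_self (t6 * t6), int_le_mul_self (t7 * t7), int_le_mul_self (t8 * t8), int_le_mul_self (t9 * t9), int_le_mul_self (t10 * t10), int_le_mul_self (t11 * t11), int_le_mul_self (t12 * t12), int_le_mul_self (t13 * t13), int_le_mul_self (t14 * t14), int_le_mul_self (t15 * t15), int_le_mul_self (t16 * t16), int_le_mul_self (t17 * t17), int_le_mul_self (t18 * t18), int_le_mul_self (t19 * t19), int_le_mul_self (t20 * t20), int_le_mul_self (t21 * t21), int_le_mul_self (t22 * t22), int_le_mul_self (t23 * t23), int_le_mul_self (t24 * t24), int_le_mul_self (t25 * t25), int_le_mul_self (t26 * t26), int_le_mul_self (t27 * t27)]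
  have q22 : (t22 * t22) * (t22 * t22) = t22 * t22 := by linarith [int_le_mul_self (t1 * t1), int_le_mul_self (t2 * t2), int_le_mul_self (t3 * t3), int_le_mul_self (t4 * t4), int_le_mul_self (t5 * t5), int_le_mul_self (t6 * t6), int_le_mul_self (t7 * t7), int_le_mul_self (t8 * t8), int_le_mul_self (t9 * t9), int_le_mul_self (t10 * t10), int_le_mul_self (t11 * t11), int_le_mul_self (t12 * t12), int_le_mul_self (t13 * t13), int_le_mul_self (t14 * t14), int_le_mul_self (t15 * t15), int_le_mul_self (t16 * t16), int_le_mul_self (t17 * t17), int_le_mul_self (t18 * t18), int_le_mul_self (t19 * t19), int_le_mul_self (t20 * t20), int_le_mul_self (t21 * t21), int_le_mul_self (t22 * t22), int_le_mul_self (t23 * t23), int_le_mul_self (t24 * t24), int_le_mul_self (t25 * t25), int_le_mul_self (t26 * t26), int_le_mul_self (t27 * t27)]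
  have q23 : (t23 * t23) * (t23 * t23) = t23 * t23 := by linarith [int_le_mul_self (t1 * t1), int_le_mul_self (t2 * t2), int_le_mul_self (t3 * t3), int_le_mul_self (t4 * t4), int_le_mul_self (t5 * t5), int_le_mul_self (t6 * t6), int_le_mul_self (t7 * t7), int_le_mul_self (t8 * t8), int_le_mul_self (t9 * t9), int_le_mul_self (t10 * t10), int_le_mul_self (t11 * t11), int_le_mul_self (t12 * t12), int_le_mul_self (t13 * t13), int_le_mul_self (t14 * t14), int_le_mul_self (t15 * t15), int_le_mul_self (t16 * t16), int_le_mul_self (t17 * t17), int_le_mul_self (t18 * t18), int_le_mul_self (t19 * t19), int_le_mul_self (t20 * t20), int_le_mul_self (t21 * t21), int_le_mul_self (t22 * t22), int_le_mul_self (t23 * t23), int_le_mul_self (t24 * t24), int_le_mul_self (t25 * t25), int_le_mul_self (t26 * t26), int_le_mul_self (t27 * t27)]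
  have q24 : (t24 * t24) * (t24 * t24) = t24 * t24 := by linarith [int_le_mul_self (t1 * t1), int_le_mul_self (t2 * t2), int_le_mul_self (t3 * t3), int_le_mul_self (t4 * t4), int_le_mul_self (t5 * t5), int_le_mul_self (t6 * t6), int_le_mul_self (t7 * t7), int_le_mul_self (t8 * t8), int_le_mul_self (t9 * t9), int_le_mul_self (t10 * t10), int_le_mul_self (t11 * t11), int_le_mul_self (t12 * t12), int_le_mul_self (t13 * t13), int_le_mul_self (t14 * t14), int_le_mul_self (t15 * t15), int_le_mul_self (t16 * t16), int_le_mul_self (t17 * t17), int_le_mul_self (t18 * t18), int_le_mul_self (t19 * t19), int_le_mul_self (t20 * t20), int_le_mul_self (t21 * t21), int_le_mul_self (t22 * t22), int_le_mul_self (t23 * t23), int_le_mul_self (t24 * t24), int_le_mul_self (t25 * t25), int_le_mul_self (t26 * t26), int_le_mul_self (t27 * t27)]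
  have q25 : (t25 * t25) * (t25 * t25) = t25 * t25 := by linarith [int_le_mul_self (t1 * t1), int_le_mul_self (t2 * t2), int_le_mul_self (t3 * t3), int_le_mul_self (t4 * t4), int_le_mul_self (t5 * t5), int_le_mul_self (t6 * t6), int_le_mul_self (t7 * t7), int_le_mul_self (t8 * t8), int_le_mul_self (t9 * t9), int_le_mul_self (t10 * t10), int_le_mul_self (t11 * t11), int_le_mul_self (t12 * t12), int_le_mul_self (t13 * t13), int_le_mul_self (t14 * t14), int_le_mul_self (t15 * t15), int_le_mul_self (t16 * t16), int_le_mul_self (t17 * t17), int_le_mul_self (t18 * t18), int_le_mul_self (t19 * t19), int_le_mul_self (t20 * t20), int_le_mul_self (t21 * t21), int_le_mul_self (t22 * t22), int_le_mul_self (t23 * t23), int_le_mul_self (t24 * t24), int_le_mul_self (t25 * t25), int_le_mul_self (t26 * t26), int_le_mul_self (t27 * t27)]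
  have q26 : (t26 * t26) * (t26 * t26) = t26 * t26 := by linarith [int_le_mul_self (t1 * t1), int_le_mul_self (t2 * t2), int_le_mul_self (t3 * t3), int_le_mul_self (t4 * t4), int_le_mul_self (t5 * t5), int_le_mul_self (t6 * t6), int_le_mul_self (t7 * t7), int_le_mul_self (t8 * t8), int_le_mul_self (t9 * t9), int_le_mul_self (t10 * t10), int_le_mul_self (t11 * t11), int_le_mul_self (t12 * t12), int_le_mul_self (t13 * t13), int_le_mul_self (t14 * t14), int_le_mul_self (t15 * t15), int_le_mul_self (t16 * t16), int_le_mul_self (t17 * t17), int_le_mul_self (t18 * t18), int_le_mul_self (t19 * t19), int_le_mul_self (t20 * t20), int_le_mul_self (t21 * t21), int_le_mul_self (t22 * t22), int_le_mul_self (t23 * t23), int_le_mul_self (t24 * t24), int_le_mul_self (t25 * t25), int_le_mul_self (t26 * t26), int_le_mul_self (t27 * t27)]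
  have q27 : (t27 * t27) * (t27 * t27) = t27 * t27 := by linarith [int_le_mul_self (t1 * t1), int_le_mul_self (t2 * t2), int_le_mul_self (t3 * t3), int_le_mul_self (t4 * t4), int_le_mul_self (t5 * t5), int_le_mul_self (t6 * t6), int_le_mul_self (t7 * t7), int_le_mul_self (t8 * t8), int_le_mul_self (t9 * t9), int_le_mul_self (t10 * t10), int_le_mul_self (t11 * t11), int_le_mul_self (t12 * t12), int_le_mul_self (t13 * t13), int_le_mul_self (t14 * t14), int_le_mul_self (t15 * t15), int_le_mul_self (t16 * t16), int_le_mul_self (t17 * t17), int_le_mul_self (t18 * t18), int_le_mul_self (t19 * t19), int_le_mul_self (t20 * t20), int_le_mul_self (t21 * t21), int_le_mul_self (t22 * t22), int_le_mul_self (t23 * t23), int_le_mul_self (t24 * t24), int_le_mul_self (t25 * t25), int_le_mul_self (t26 * t26), int_le_mul_self (t27 * t27)]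
  have m1 : t1 = -1 ∨ t1 = 0 ∨ t1 = 1 := trich _ q1
  have m2 : t2 = -1 ∨ t2 = 0 ∨ t2 = 1 := trich _ q2
  have m3 : t3 = -1 ∨ t3 = 0 ∨ t3 = 1 := trich _ q3
  have m4 : t4 = -1 ∨ t4 = 0 ∨ t4 = 1 := trich _ q4
  have m5 : t5 = -1 ∨ t5 = 0 ∨ t5 = 1 := trich _ q5
  have m6 : t6 = -1 ∨ t6 = 0 ∨ t6 = 1 := trich _ q6
  have m7 : t7 = -1 ∨ t7 = 0 ∨ t7 = 1 := trich _ q7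
  have m8 : t8 = -1 ∨ t8 = 0 ∨ t8 = 1 := trich _ q8
  have m9 : t9 = -1 ∨ t9 = 0 ∨ t9 = 1 := trich _ q9
  have m10 : t10 = -1 ∨ t10 = 0 ∨ t10 = 1 := trich _ q10
  have m11 : t11 = -1 ∨ t11 = 0 ∨ t11 = 1 := trich _ q11
  have m12 : t12 = -1 ∨ t12 = 0 ∨ t12 = 1 := trich _ q12
  have m13 : t13 = -1 ∨ t13 = 0 ∨ t13 = 1 := trich _ q13
  have m14 : t14 = -1 ∨ t14 = 0 ∨ t14 = 1 := trich _ q14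
  have m15 : t15 = -1 ∨ t15 = 0 ∨ t15 = 1 := trich _ q15
  have m16 : t16 = -1 ∨ t16 = 0 ∨ t16 = 1 := trich _ q16
  have m17 : t17 = -1 ∨ t17 = 0 ∨ t17 = 1 := trich _ q17
  have m18 : t18 = -1 ∨ t18 = 0 ∨ t18 = 1 := trich _ q18
  have m19 : t19 = -1 ∨ t19 = 0 ∨ t19 = 1 := trich _ q19
  have m20 : t20 = -1 ∨ t20 = 0 ∨ t20 = 1 := trich _ q20
  have m21 : t21 = -1 ∨ t21 = 0 ∨ t21 = 1 := trich _ q21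
  have m22 : t22 = -1 ∨ t22 = 0 ∨ t22 = 1 := trich _ q22
  have m23 : t23 = -1 ∨ t23 = 0 ∨ t23 = 1 := trich _ q23
  have m24 : t24 = -1 ∨ t24 = 0 ∨ t24 = 1 := trich _ q24
  have m25 : t25 = -1 ∨ t25 = 0 ∨ t25 = 1 := trich _ q25
  have m26 : t26 = -1 ∨ t26 = 0 ∨ t26 = 1 := trich _ q26
  have m27 : t27 = -1 ∨ t27 = 0 ∨ t27 = 1 := trich _ q27
  refine ⟨⟨m1, m2, m3, m4, m5, m6, m7, m8, m9, m10, m11, m12, m13, m14, m15, m16, m17, m18, m19, m20, m21, m22, m23, m24, m25, m26, m27⟩, ?_, ?_⟩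
  · linarith [ind_neg _ m1, ind_neg _ m2, ind_neg _ m3, ind_neg _ m4, ind_neg _ m5, ind_neg _ m6, ind_neg _ m7, ind_neg _ m8, ind_neg _ m9, ind_neg _ m10, ind_neg _ m11, ind_neg _ m12, ind_neg _ m13, ind_neg _ m14, ind_neg _ m15, ind_neg _ m16, ind_neg _ m17, ind_neg _ m18, ind_neg _ m19, ind_neg _ m20, ind_neg _ m21, ind_neg _ m22, ind_neg _ m23, ind_neg _ m24, ind_neg _ m25, ind_neg _ m26, ind_neg _ m27]
  · linarith [ind_zero _ m1, ind_zero _ m2, ind_zero _ m3, ind_zero _ m4, ind_zero _ m5, ind_zero _ m6, ind_zero _ m7, ind_zero _ m8, ind_zero _ m9, ind_zero _ m10, ind_zero _ m11, ind_zero _ m12, ind_zero _ m13, ind_zero _ m14, ind_zero _ m15, ind_zero _ m16, ind_zero _ m17, ind_zero _ m18, ind_zero _ m19, ind_zero _ m20, ind_zero _ m21, ind_zero _ m22, ind_zero _ m23, ind_zero _ m24, ind_zero _ m25, ind_zero _ m26, ind_zero _ m27]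

lemma mem_Yset_iff (y : L) : y ∈ Yset ↔ y ∈ ylist := by
  constructor
  · rintro ⟨h1, h2⟩
    have h1' : (3:ℤ) * y 0 - ((-1) * y 1 + (-1) * y 2 + (-1) * y 3 + (-1) * y 4 + (-1) * y 5 + (-1) * y 6) = 1 := h1
    have h2' : y 0 * y 0 - (y 1 * y 1 + y 2 * y 2 + y 3 * y 3 + y 4 * y 4 + y 5 * y 5 + y 6 * y 6) = -1 := h2
    have hs : y 1 + y 2 + y 3 + y 4 + y 5 + y 6 = 1 - 3 * y 0 := by linarith
    have hsq : (y 1 + y 2 + y 3 + y 4 + y 5 + y 6) * (y 1 + y 2 + y 3 + y 4 + y 5 + y 6) = (1 - 3 * y 0) * (1 - 3 * y 0) := by rw [hs]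
    have hP : (0:ℤ) ≤ (y 1 - y 2)^2 + (y 1 - y 3)^2 + (y 1 - y 4)^2 + (y 1 - y 5)^2 + (y 1 - y 6)^2 + (y 2 - y 3)^2 + (y 2 - y 4)^2 + (y 2 - y 5)^2 + (y 2 - y 6)^2 + (y 3 - y 4)^2 + (y 3 - y 5)^2 + (y 3 - y 6)^2 + (y 4 - y 5)^2 + (y 4 - y 6)^2 + (y 5 - y 6)^2 := by positivity
    have hq : 3 * (y 0 * y 0) ≤ 6 * y 0 + 5 := by linarith [hP, hsq]
    have hlow : 12 * y 0 ≥ -8 := by linarith [sq_nonneg (y 0 + 1)]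
    have hhigh : 6 * y 0 ≤ 17 := by linarith [sq_nonneg (y 0 - 2)]
    have ha : y 0 = 0 ∨ y 0 = 1 ∨ y 0 = 2 := by omega
    rcases ha with hy0 | hy0 | hy0
    · rw [hy0] at h1' h2'
      have k1 : y 1 * y 1 = y 1 := by linarith [int_le_mul_self (y 1), int_le_mul_self (y 2), int_le_mul_self (y 3), int_le_mul_self (y 4), int_le_mul_self (y 5), int_le_mul_self (y 6)]
      have k2 : y 2 * y 2 = y 2 := by linarith [int_le_mul_self (y 1), int_le_mul_self (y 2), int_le_mul_self (y 3), int_le_mul_self (y 4), int_le_mul_self (y 5), int_le_mul_self (y 6)]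
      have k3 : y 3 * y 3 = y 3 := by linarith [int_le_mul_self (y 1), int_le_mul_self (y 2), int_le_mul_self (y 3), int_le_mul_self (y 4), int_le_mul_self (y 5), int_le_mul_self (y 6)]
      have k4 : y 4 * y 4 = y 4 := by linarith [int_le_mul_self (y 1), int_le_mul_self (y 2), int_le_mul_self (y 3), int_le_mul_self (y 4), int_le_mul_self (y 5), int_le_mul_self (y 6)]
      have k5 : y 5 * y 5 = y 5 := by linarith [int_le_mul_self (y 1), int_le_mul_self (y 2), int_le_mul_self (y 3), int_le_mul_self (y 4), int_le_mul_self (y 5), int_le_mul_self (y 6)]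
      have k6 : y 6 * y 6 = y 6 := by linarith [int_le_mul_self (y 1), int_le_mul_self (y 2), int_le_mul_self (y 3), int_le_mul_self (y 4), int_le_mul_self (y 5), int_le_mul_self (y 6)]
      have d1 : y 1 = 0 ∨ y 1 = 1 := mul_self_eq_self _ k1
      have d2 : y 2 = 0 ∨ y 2 = 1 := mul_self_eq_self _ k2
      have d3 : y 3 = 0 ∨ y 3 = 1 := mul_self_eq_self _ k3
      have d4 : y 4 = 0 ∨ y 4 = 1 := mul_self_eq_self _ k4
      have d5 : y 5 = 0 ∨ y 5 = 1 := mul_self_eq_self _ k5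
      have d6 : y 6 = 0 ∨ y 6 = 1 := mul_self_eq_self _ k6
      rcases d1 with e1 | e1 <;> rcases d2 with e2 | e2 <;> rcases d3 with e3 | e3 <;> rcases d4 with e4 | e4 <;> rcases d5 with e5 | e5 <;> rcases d6 with e6 | e6 <;>
        first
          | (exfalso; omega)
          | (rw [eq_vec_of_coords y hy0 e1 e2 e3 e4 e5 e6]; decide)
    · rw [hy0] at h1' h2'
      have k1 : y 1 * y 1 = -(y 1) := by linarith [int_neg_le_mul_self (y 1), int_neg_le_mul_self (y 2), int_neg_le_mul_self (y 3), int_neg_le_mul_self (y 4), int_neg_le_mul_self (y 5), int_neg_le_mul_self (y 6)]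
      have k2 : y 2 * y 2 = -(y 2) := by linarith [int_neg_le_mul_self (y 1), int_neg_le_mul_self (y 2), int_neg_le_mul_self (y 3), int_neg_le_mul_self (y 4), int_neg_le_mul_self (y 5), int_neg_le_mul_self (y 6)]
      have k3 : y 3 * y 3 = -(y 3) := by linarith [int_neg_le_mul_self (y 1), int_neg_le_mul_self (y 2), int_neg_le_mul_self (y 3), int_neg_le_mul_self (y 4), int_neg_le_mul_self (y 5), int_neg_le_mul_self (y 6)]
      have k4 : y 4 * y 4 = -(y 4) := by linarith [int_neg_le_mul_self (y 1), int_neg_le_mul_self (y 2), int_neg_le_mul_self (y 3), int_neg_le_mul_self (y 4), int_neg_le_mul_self (y 5), int_neg_le_mul_self (y 6)]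
      have k5 : y 5 * y 5 = -(y 5) := by linarith [int_neg_le_mul_self (y 1), int_neg_le_mul_self (y 2), int_neg_le_mul_self (y 3), int_neg_le_mul_self (y 4), int_neg_le_mul_self (y 5), int_neg_le_mul_self (y 6)]
      have k6 : y 6 * y 6 = -(y 6) := by linarith [int_neg_le_mul_self (y 1), int_neg_le_mul_self (y 2), int_neg_le_mul_self (y 3), int_neg_le_mul_self (y 4), int_neg_le_mul_self (y 5), int_neg_le_mul_self (y 6)]
      have d1 : y 1 = 0 ∨ y 1 = -1 := mul_self_eq_neg_self _ k1
      have d2 : y 2 = 0 ∨ y 2 = -1 := mul_self_eq_neg_self _ k2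
      have d3 : y 3 = 0 ∨ y 3 = -1 := mul_self_eq_neg_self _ k3
      have d4 : y 4 = 0 ∨ y 4 = -1 := mul_self_eq_neg_self _ k4
      have d5 : y 5 = 0 ∨ y 5 = -1 := mul_self_eq_neg_self _ k5
      have d6 : y 6 = 0 ∨ y 6 = -1 := mul_self_eq_neg_self _ k6
      rcases d1 with e1 | e1 <;> rcases d2 with e2 | e2 <;> rcases d3 with e3 | e3 <;> rcases d4 with e4 | e4 <;> rcases d5 with e5 | e5 <;> rcases d6 with e6 | e6 <;>
        first
          | (exfalso; omega)
          | (rw [eq_vec_of_coords y hy0 e1 e2 e3 e4 e5 e6]; decide)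
    · rw [hy0] at h1' h2'
      have k1 : y 1 * y 1 = -(y 1) := by linarith [int_neg_le_mul_self (y 1), int_neg_le_mul_self (y 2), int_neg_le_mul_self (y 3), int_neg_le_mul_self (y 4), int_neg_le_mul_self (y 5), int_neg_le_mul_self (y 6)]
      have k2 : y 2 * y 2 = -(y 2) := by linarith [int_neg_le_mul_self (y 1), int_neg_le_mul_self (y 2), int_neg_le_mul_self (y 3), int_neg_le_mul_self (y 4), int_neg_le_mul_self (y 5), int_neg_le_mul_self (y 6)]
      have k3 : y 3 * y 3 = -(y 3) := by linarith [int_neg_le_mul_self (y 1), int_neg_le_mul_self (y 2), int_neg_le_mul_self (y 3), int_neg_le_mul_self (y 4), int_neg_le_mul_self (y 5), int_neg_le_mul_self (y 6)]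
      have k4 : y 4 * y 4 = -(y 4) := by linarith [int_neg_le_mul_self (y 1), int_neg_le_mul_self (y 2), int_neg_le_mul_self (y 3), int_neg_le_mul_self (y 4), int_neg_le_mul_self (y 5), int_neg_le_mul_self (y 6)]
      have k5 : y 5 * y 5 = -(y 5) := by linarith [int_neg_le_mul_self (y 1), int_neg_le_mul_self (y 2), int_neg_le_mul_self (y 3), int_neg_le_mul_self (y 4), int_neg_le_mul_self (y 5), int_neg_le_mul_self (y 6)]
      have k6 : y 6 * y 6 = -(y 6) := by linarith [int_neg_le_mul_self (y 1), int_neg_le_mul_self (y 2), int_neg_le_mul_self (y 3), int_neg_le_mul_self (y 4), int_neg_le_mul_self (y 5), int_neg_le_mul_self (y 6)]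
      have d1 : y 1 = 0 ∨ y 1 = -1 := mul_self_eq_neg_self _ k1
      have d2 : y 2 = 0 ∨ y 2 = -1 := mul_self_eq_neg_self _ k2
      have d3 : y 3 = 0 ∨ y 3 = -1 := mul_self_eq_neg_self _ k3
      have d4 : y 4 = 0 ∨ y 4 = -1 := mul_self_eq_neg_self _ k4
      have d5 : y 5 = 0 ∨ y 5 = -1 := mul_self_eq_neg_self _ k5
      have d6 : y 6 = 0 ∨ y 6 = -1 := mul_self_eq_neg_self _ k6
      rcases d1 with e1 | e1 <;> rcases d2 with e2 | e2 <;> rcases d3 with e3 | e3 <;> rcases d4 with e4 | e4 <;> rcases d5 with e5 | e5 <;> rcases d6 with e6 | e6 <;>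
        first
          | (exfalso; omega)
          | (rw [eq_vec_of_coords y hy0 e1 e2 e3 e4 e5 e6]; decide)
  · intro hy
    simp only [ylist, List.mem_cons, List.not_mem_nil, or_false] at hy
    rcases hy with rfl | rfl | rfl | rfl | rfl | rfl | rfl | rfl | rfl | rfl | rfl | rfl | rfl | rfl | rfl | rfl | rfl | rfl | rfl | rfl | rfl | rfl | rfl | rfl | rfl | rfl | rfl
    all_goals exact ⟨by decide, by decide⟩

theorem root_gives_double_six (α : L) (hα : α ∈ Rset) :
    (linePairs α).Finite ∧ (linePairs α).ncard = 6 ∧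
    (∀ p ∈ linePairs α, B p.1 p.2 = 0) ∧
    {x : L | ∃ p ∈ linePairs α, x = p.1 ∨ x = p.2}.ncard = 12 ∧
    (∀ p ∈ linePairs α, sfun α p.1 = p.2 ∧ sfun α p.2 = p.1) ∧
    (∀ y ∈ Yset, (∀ p ∈ linePairs α, y ≠ p.1 ∧ y ≠ p.2) → sfun α y = y) ∧
    {y ∈ Yset | sfun α y = y}.ncard = 15 := by
  obtain ⟨hα1, hα2⟩ := hα
  have h1' : (3:ℤ) * α 0 - ((-1) * α 1 + (-1) * α 2 + (-1) * α 3 + (-1) * α 4 + (-1) * α 5 + (-1) * α 6) = 0 := hα1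
  have h2' : α 0 * α 0 - (α 1 * α 1 + α 2 * α 2 + α 3 * α 3 + α 4 * α 4 + α 5 * α 5 + α 6 * α 6) = -2 := hα2
  have S1 : B ![(0:ℤ),1,0,0,0,0,0] α + B ![(0:ℤ),0,1,0,0,0,0] α + B ![(0:ℤ),0,0,1,0,0,0] α + B ![(0:ℤ),0,0,0,1,0,0] α + B ![(0:ℤ),0,0,0,0,1,0] α + B ![(0:ℤ),0,0,0,0,0,1] α + B ![(1:ℤ),-1,-1,0,0,0,0] α + B ![(1:ℤ),-1,0,-1,0,0,0] α + B ![(1:ℤ),-1,0,0,-1,0,0] α + B ![(1:ℤ),-1,0,0,0,-1,0] α + B ![(1:ℤ),-1,0,0,0,0,-1] α + B ![(1:ℤ),0,-1,-1,0,0,0] α + B ![(1:ℤ),0,-1,0,-1,0,0] α + B ![(1:ℤ),0,-1,0,0,-1,0] α + B ![(1:ℤ),0,-1,0,0,0,-1] α + B ![(1:ℤ),0,0,-1,-1,0,0] α + B ![(1:ℤ),0,0,-1,0,-1,0] α + B ![(1:ℤ),0,0,-1,0,0,-1] α + B ![(1:ℤ),0,0,0,-1,-1,0] α + B ![(1:ℤ),0,0,0,-1,0,-1]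 α + B ![(1:ℤ),0,0,0,0,-1,-1] α + B ![(2:ℤ),0,-1,-1,-1,-1,-1] α + B ![(2:ℤ),-1,0,-1,-1,-1,-1] α + B ![(2:ℤ),-1,-1,0,-1,-1,-1] α + B ![(2:ℤ),-1,-1,-1,0,-1,-1] α + B ![(2:ℤ),-1,-1,-1,-1,0,-1] α + B ![(2:ℤ),-1,-1,-1,-1,-1,0] α = 0 := by
    simp only [B_lit]; linear_combination 9 * h1'
  have S2 : B ![(0:ℤ),1,0,0,0,0,0] α * B ![(0:ℤ),1,0,0,0,0,0] α + B ![(0:ℤ),0,1,0,0,0,0] α * B ![(0:ℤ),0,1,0,0,0,0] α + B ![(0:ℤ),0,0,1,0,0,0] α * B ![(0:ℤ),0,0,1,0,0,0] α + B ![(0:ℤ),0,0,0,1,0,0] α * B ![(0:ℤ),0,0,0,1,0,0] α + B ![(0:ℤ),0,0,0,0,1,0] α * B ![(0:ℤ),0,0,0,0,1,0] α + B ![(0:ℤ),0,0,0,0,0,1] α * B ![(0:ℤ),0,0,0,0,0,1] α + B ![(1:ℤ),-1,-1,0,0,0,0] α * B ![(1:ℤ),-1,-1,0,0,0,0] α +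 B ![(1:ℤ),-1,0,-1,0,0,0] α * B ![(1:ℤ),-1,0,-1,0,0,0] α + B ![(1:ℤ),-1,0,0,-1,0,0] α * B ![(1:ℤ),-1,0,0,-1,0,0] α + B ![(1:ℤ),-1,0,0,0,-1,0] α * B ![(1:ℤ),-1,0,0,0,-1,0] α + B ![(1:ℤ),-1,0,0,0,0,-1] α * B ![(1:ℤ),-1,0,0,0,0,-1] α + B ![(1:ℤ),0,-1,-1,0,0,0] α * B ![(1:ℤ),0,-1,-1,0,0,0] α + B ![(1:ℤ),0,-1,0,-1,0,0] α * B ![(1:ℤ),0,-1,0,-1,0,0] α + B ![(1:ℤ),0,-1,0,0,-1,0] α * B ![(1:ℤ),0,-1,0,0,-1,0] α + B ![(1:ℤ),0,-1,0,0,0,-1] α * B ![(1:ℤ),0,-1,0,0,0,-1] α + B ![(1:ℤ),0,0,-1,-1,0,0] α * B ![(1:ℤ),0,0,-1,-1,0,0] α + B ![(1:ℤ),0,0,-1,0,-1,0] α * B ![(1:ℤ),0,0,-1,0,-1,0] α + B ![(1:ℤ),0,0,-1,0,0,-1] α * B ![(1:ℤ),0,0,-1,0,0,-1] α + B ![(1:ℤ),0,0,0,-1,-1,0]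 α * B ![(1:ℤ),0,0,0,-1,-1,0] α + B ![(1:ℤ),0,0,0,-1,0,-1] α * B ![(1:ℤ),0,0,0,-1,0,-1] α + B ![(1:ℤ),0,0,0,0,-1,-1] α * B ![(1:ℤ),0,0,0,0,-1,-1] α + B ![(2:ℤ),0,-1,-1,-1,-1,-1] α * B ![(2:ℤ),0,-1,-1,-1,-1,-1] α + B ![(2:ℤ),-1,0,-1,-1,-1,-1] α * B ![(2:ℤ),-1,0,-1,-1,-1,-1] α + B ![(2:ℤ),-1,-1,0,-1,-1,-1] α * B ![(2:ℤ),-1,-1,0,-1,-1,-1] α + B ![(2:ℤ),-1,-1,-1,0,-1,-1] α * B ![(2:ℤ),-1,-1,-1,0,-1,-1] α + B ![(2:ℤ),-1,-1,-1,-1,0,-1] α * B ![(2:ℤ),-1,-1,-1,-1,0,-1] α + B ![(2:ℤ),-1,-1,-1,-1,-1,0] α * B ![(2:ℤ),-1,-1,-1,-1,-1,0] α = 12 := by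
    simp only [B_lit]; linear_combination (5 * (3 * α 0 + α 1 + α 2 + α 3 + α 4 + α 5 + α 6)) * h1' - 6 * h2'
  have S4 : (B ![(0:ℤ),1,0,0,0,0,0] α * B ![(0:ℤ),1,0,0,0,0,0] α) * (B ![(0:ℤ),1,0,0,0,0,0] α * B ![(0:ℤ),1,0,0,0,0,0] α) + (B ![(0:ℤ),0,1,0,0,0,0] α * B ![(0:ℤ),0,1,0,0,0,0] α) * (B ![(0:ℤ),0,1,0,0,0,0] α * B ![(0:ℤ),0,1,0,0,0,0] α) + (B ![(0:ℤ),0,0,1,0,0,0] α * B ![(0:ℤ),0,0,1,0,0,0] α) * (B ![(0:ℤ),0,0,1,0,0,0] α * B ![(0:ℤ),0,0,1,0,0,0] α) + (B ![(0:ℤ),0,0,0,1,0,0] α * B ![(0:ℤ),0,0,0,1,0,0] α) * (B ![(0:ℤ),0,0,0,1,0,0] α * B ![(0:ℤ),0,0,0,1,0,0] α) + (B ![(0:ℤ),0,0,0,0,1,0] α * B ![(0:ℤ),0,0,0,0,1,0] α) * (B ![(0:ℤ),0,0,0,0,1,0] α * B ![(0:ℤ),0,0,0,0,1,0] α) + (B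 ![(0:ℤ),0,0,0,0,0,1] α * B ![(0:ℤ),0,0,0,0,0,1] α) * (B ![(0:ℤ),0,0,0,0,0,1] α * B ![(0:ℤ),0,0,0,0,0,1] α) + (B ![(1:ℤ),-1,-1,0,0,0,0] α * B ![(1:ℤ),-1,-1,0,0,0,0] α) * (B ![(1:ℤ),-1,-1,0,0,0,0] α * B ![(1:ℤ),-1,-1,0,0,0,0] α) + (B ![(1:ℤ),-1,0,-1,0,0,0] α * B ![(1:ℤ),-1,0,-1,0,0,0] α) * (B ![(1:ℤ),-1,0,-1,0,0,0] α * B ![(1:ℤ),-1,0,-1,0,0,0] α) + (B ![(1:ℤ),-1,0,0,-1,0,0] α * B ![(1:ℤ),-1,0,0,-1,0,0] α) * (B ![(1:ℤ),-1,0,0,-1,0,0] α * B ![(1:ℤ),-1,0,0,-1,0,0] α) + (B ![(1:ℤ),-1,0,0,0,-1,0] α * B ![(1:ℤ),-1,0,0,0,-1,0] α) * (B ![(1:ℤ),-1,0,0,0,-1,0] α * B ![(1:ℤ),-1,0,0,0,-1,0] α) + (B ![(1:ℤ),-1,0,0,0,0,-1] α * B ![(1:ℤ),-1,0,0,0,0,-1]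 α) * (B ![(1:ℤ),-1,0,0,0,0,-1] α * B ![(1:ℤ),-1,0,0,0,0,-1] α) + (B ![(1:ℤ),0,-1,-1,0,0,0] α * B ![(1:ℤ),0,-1,-1,0,0,0] α) * (B ![(1:ℤ),0,-1,-1,0,0,0] α * B ![(1:ℤ),0,-1,-1,0,0,0] α) + (B ![(1:ℤ),0,-1,0,-1,0,0] α * B ![(1:ℤ),0,-1,0,-1,0,0] α) * (B ![(1:ℤ),0,-1,0,-1,0,0] α * B ![(1:ℤ),0,-1,0,-1,0,0] α) + (B ![(1:ℤ),0,-1,0,0,-1,0] α * B ![(1:ℤ),0,-1,0,0,-1,0] α) * (B ![(1:ℤ),0,-1,0,0,-1,0] α * B ![(1:ℤ),0,-1,0,0,-1,0] α) + (B ![(1:ℤ),0,-1,0,0,0,-1] α * B ![(1:ℤ),0,-1,0,0,0,-1] α) * (B ![(1:ℤ),0,-1,0,0,0,-1] α * B ![(1:ℤ),0,-1,0,0,0,-1] α) + (B ![(1:ℤ),0,0,-1,-1,0,0] α * B ![(1:ℤ),0,0,-1,-1,0,0] α) * (B ![(1:ℤ),0,0,-1,-1,0,0] α * B ![(1:ℤ),0,0,-1,-1,0,0]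 α) + (B ![(1:ℤ),0,0,-1,0,-1,0] α * B ![(1:ℤ),0,0,-1,0,-1,0] α) * (B ![(1:ℤ),0,0,-1,0,-1,0] α * B ![(1:ℤ),0,0,-1,0,-1,0] α) + (B ![(1:ℤ),0,0,-1,0,0,-1] α * B ![(1:ℤ),0,0,-1,0,0,-1] α) * (B ![(1:ℤ),0,0,-1,0,0,-1] α * B ![(1:ℤ),0,0,-1,0,0,-1] α) + (B ![(1:ℤ),0,0,0,-1,-1,0] α * B ![(1:ℤ),0,0,0,-1,-1,0] α) * (B ![(1:ℤ),0,0,0,-1,-1,0] α * B ![(1:ℤ),0,0,0,-1,-1,0] α) + (B ![(1:ℤ),0,0,0,-1,0,-1] α * B ![(1:ℤ),0,0,0,-1,0,-1] α) * (B ![(1:ℤ),0,0,0,-1,0,-1] α * B ![(1:ℤ),0,0,0,-1,0,-1] α) + (B ![(1:ℤ),0,0,0,0,-1,-1] α * B ![(1:ℤ),0,0,0,0,-1,-1] α) * (B ![(1:ℤ),0,0,0,0,-1,-1] α * B ![(1:ℤ),0,0,0,0,-1,-1] α) + (B ![(2:ℤ),0,-1,-1,-1,-1,-1] α * B ![(2:ℤ),0,-1,-1,-1,-1,-1]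 α) * (B ![(2:ℤ),0,-1,-1,-1,-1,-1] α * B ![(2:ℤ),0,-1,-1,-1,-1,-1] α) + (B ![(2:ℤ),-1,0,-1,-1,-1,-1] α * B ![(2:ℤ),-1,0,-1,-1,-1,-1] α) * (B ![(2:ℤ),-1,0,-1,-1,-1,-1] α * B ![(2:ℤ),-1,0,-1,-1,-1,-1] α) + (B ![(2:ℤ),-1,-1,0,-1,-1,-1] α * B ![(2:ℤ),-1,-1,0,-1,-1,-1] α) * (B ![(2:ℤ),-1,-1,0,-1,-1,-1] α * B ![(2:ℤ),-1,-1,0,-1,-1,-1] α) + (B ![(2:ℤ),-1,-1,-1,0,-1,-1] α * B ![(2:ℤ),-1,-1,-1,0,-1,-1] α) * (B ![(2:ℤ),-1,-1,-1,0,-1,-1] α * B ![(2:ℤ),-1,-1,-1,0,-1,-1] α) + (B ![(2:ℤ),-1,-1,-1,-1,0,-1] α * B ![(2:ℤ),-1,-1,-1,-1,0,-1] α) * (B ![(2:ℤ),-1,-1,-1,-1,0,-1] α * B ![(2:ℤ),-1,-1,-1,-1,0,-1] α) + (B ![(2:ℤ),-1,-1,-1,-1,-1,0] α * B ![(2:ℤ),-1,-1,-1,-1,-1,0]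 α) * (B ![(2:ℤ),-1,-1,-1,-1,-1,0] α * B ![(2:ℤ),-1,-1,-1,-1,-1,0] α) = 12 := by
    simp only [B_lit]; linear_combination (2 * (3 * α 0 + α 1 + α 2 + α 3 + α 4 + α 5 + α 6) ^ 3 - 6 * (3 * α 0 + α 1 + α 2 + α 3 + α 4 + α 5 + α 6) * (α 0 * α 0 - (α 1 * α 1 + α 2 * α 2 + α 3 * α 3 + α 4 * α 4 + α 5 * α 5 + α 6 * α 6))) * h1' + (3 * (α 0 * α 0 - (α 1 * α 1 + α 2 * α 2 + α 3 * α 3 + α 4 * α 4 + α 5 * α 5 + α 6 * α 6)) - 6) * h2'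
  obtain ⟨⟨m1, m2, m3, m4, m5, m6, m7, m8, m9, m10, m11, m12, m13, m14, m15, m16, m17, m18, m19, m20, m21, m22, m23, m24, m25, m26, m27⟩, c6, c15⟩ := magic (B ![(0:ℤ),1,0,0,0,0,0] α) (B ![(0:ℤ),0,1,0,0,0,0] α) (B ![(0:ℤ),0,0,1,0,0,0] α) (B ![(0:ℤ),0,0,0,1,0,0] α) (B ![(0:ℤ),0,0,0,0,1,0] α) (B ![(0:ℤ),0,0,0,0,0,1] α) (B ![(1:ℤ),-1,-1,0,0,0,0] α) (B ![(1:ℤ),-1,0,-1,0,0,0] α) (B ![(1:ℤ),-1,0,0,-1,0,0] α) (B ![(1:ℤ),-1,0,0,0,-1,0] α) (B ![(1:ℤ),-1,0,0,0,0,-1] α) (B ![(1:ℤ),0,-1,-1,0,0,0] α) (B ![(1:ℤ),0,-1,0,-1,0,0] α) (B ![(1:ℤ),0,-1,0,0,-1,0] α) (B ![(1:ℤ),0,-1,0,0,0,-1] α) (B ![(1:ℤ),0,0,-1,-1,0,0] α) (B ![(1:ℤ),0,0,-1,0,-1,0] α) (B ![(1:ℤ),0,0,-1,0,0,-1] α)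 (B ![(1:ℤ),0,0,0,-1,-1,0] α) (B ![(1:ℤ),0,0,0,-1,0,-1] α) (B ![(1:ℤ),0,0,0,0,-1,-1] α) (B ![(2:ℤ),0,-1,-1,-1,-1,-1] α) (B ![(2:ℤ),-1,0,-1,-1,-1,-1] α) (B ![(2:ℤ),-1,-1,0,-1,-1,-1] α) (B ![(2:ℤ),-1,-1,-1,0,-1,-1] α) (B ![(2:ℤ),-1,-1,-1,-1,0,-1] α) (B ![(2:ℤ),-1,-1,-1,-1,-1,0] α) S1 S2 S4
  have key : ∀ y ∈ ylist, B y α = -1 ∨ B y α = 0 ∨ B y α = 1 := by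
    intro y hy
    simp only [ylist, List.mem_cons, List.not_mem_nil, or_false] at hy
    rcases hy with rfl | rfl | rfl | rfl | rfl | rfl | rfl | rfl | rfl | rfl | rfl | rfl | rfl | rfl | rfl | rfl | rfl | rfl | rfl | rfl | rfl | rfl | rfl | rfl | rfl | rfl | rfl
    exacts [m1, m2, m3, m4, m5, m6, m7, m8, m9, m10, m11, m12, m13, m14, m15, m16, m17, m18, m19, m20, m21, m22, m23, m24, m25, m26, m27]
  have hnd : ylist.Nodup := by decide
  have hα0 : α ≠ 0 := by
    intro h; rw [h] at h2'
    norm_num [Pi.zero_apply] at h2'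
  have hsfun : ∀ y : L, B y α = 0 → sfun α y = y := by
    intro y hB
    show y + B y α • α = y
    rw [hB, zero_smul, add_zero]
  have pairB : ∀ p ∈ linePairs α, B p.1 p.2 = 0 ∧ B p.1 α = -1 ∧ p.2 = p.1 - α := by
    intro p hp
    obtain ⟨hx, hx', hd⟩ := hp
    have e : B (p.1 - p.2) (p.1 - p.2) = -2 := by rw [hd]; exact hα2
    rw [B_sub_left, B_sub_right, B_sub_right] at e
    have hcomm := B_comm p.2 p.1
    have hBc : B p.1 p.2 = 0 := by linarith [hx.2, hx'.2]
    have hBα : B p.1 α = -1 := by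
      rw [← hd, B_sub_right, hBc]; linarith [hx.2]
    exact ⟨hBc, hBα, by rw [← hd]; abel⟩
  have memY_of : ∀ x ∈ Yset, B x α = -1 → (x - α) ∈ Yset := by
    intro x hx hB
    refine ⟨?_, ?_⟩
    · rw [B_sub_right, hx.1, hα1]; ring
    · rw [B_sub_left, B_sub_right, B_sub_right]
      have hc := B_comm α x
      linarith [hx.2, hα2]
  have memY_of' : ∀ x ∈ Yset, B x α = 1 → (x + α) ∈ Yset := by
    intro x hx hB
    refine ⟨?_, ?_⟩
    · rw [B_add_right, hx.1, hα1]; ring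
    · rw [B_add_left, B_add_right, B_add_right]
      have hc := B_comm α x
      linarith [hx.2, hα2]
  have hLP : linePairs α = ↑((ylist.toFinset.filter (fun y => B y α = -1)).image (fun x => (x, x - α))) := by
    ext p
    simp only [Finset.coe_image, Set.mem_image, Finset.mem_coe, Finset.mem_filter,
      List.mem_toFinset]
    constructor
    · intro hp
      obtain ⟨hBc, hBα, hp2⟩ := pairB p hp
      exact ⟨p.1, ⟨(mem_Yset_iff _).mp hp.1, hBα⟩, Prod.ext rfl hp2.symm⟩
    · rintro ⟨x, ⟨hxl, hxB⟩, rfl⟩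
      have hxY : x ∈ Yset := (mem_Yset_iff x).mpr hxl
      exact ⟨hxY, memY_of x hxY hxB, by simp⟩
  have cF1 : ((ylist.toFinset.filter (fun y => B y α = -1)).card : ℤ) = 6 := by
    rw [← Finset.sum_boole, List.sum_toFinset _ hnd]
    simp only [ylist, List.map_cons, List.map_nil, List.sum_cons, List.sum_nil]
    linarith [c6]
  have cFix : ((ylist.toFinset.filter (fun y => B y α = 0)).card : ℤ) = 15 := by
    rw [← Finset.sum_boole, List.sum_toFinset _ hnd]
    simp only [ylist, List.map_cons, List.map_nil, List.sum_cons, List.sum_nil]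
    linarith [c15]
  have cF1n : (ylist.toFinset.filter (fun y => B y α = -1)).card = 6 := by exact_mod_cast cF1
  have cFixn : (ylist.toFinset.filter (fun y => B y α = 0)).card = 15 := by exact_mod_cast cFix
  have hy27 : ylist.toFinset.card = 27 := by
    rw [List.toFinset_card_of_nodup hnd]; rfl
  have hcompl := Finset.card_filter_add_card_filter_not
    (s := ylist.toFinset) (p := fun y => B y α = 0)
  have cEn : (ylist.toFinset.filter (fun y => ¬ B y α = 0)).card = 12 := by omega
  have hinj : Function.Injective (fun x : L => (x, x - α)) := fun a b h2 => congrArg Prod.fst h2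
  refine ⟨?_, ?_, ?_, ?_, ?_, ?_, ?_⟩
  · rw [hLP]; exact Finset.finite_toSet _
  · rw [hLP, Set.ncard_coe_finset, Finset.card_image_of_injective _ hinj]
    exact cF1n
  · exact fun p hp => (pairB p hp).1
  · have hE : {x : L | ∃ p ∈ linePairs α, x = p.1 ∨ x = p.2}
        = ↑(ylist.toFinset.filter (fun y => ¬ B y α = 0)) := by
      ext x
      simp only [Set.mem_setOf_eq, Finset.coe_filter, Set.mem_setOf_eq, List.mem_toFinset]
      constructor
      · rintro ⟨p, hp, hx | hx⟩
        · obtain ⟨hBc, hBα, hp2⟩ := pairB p hp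
          subst hx
          exact ⟨(mem_Yset_iff _).mp hp.1, by omega⟩
        · obtain ⟨hBc, hBα, hp2⟩ := pairB p hp
          subst hx
          have hB2 : B p.2 α = 1 := by rw [hp2, B_sub_left]; linarith
          exact ⟨(mem_Yset_iff _).mp hp.2.1, by omega⟩
      · rintro ⟨hxl, hxB⟩
        have hxY : x ∈ Yset := (mem_Yset_iff x).mpr hxl
        rcases key x hxl with hB | hB | hB
        · exact ⟨(x, x - α), ⟨hxY, memY_of x hxY hB, by simp⟩, Or.inl rfl⟩
        · exact absurd hB hxB
        · exact ⟨(x + α, x), ⟨memY_of' x hxY hB, hxY, by simp⟩, Or.inr rfl⟩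
    rw [hE, Set.ncard_coe_finset]
    exact cEn
  · intro p hp
    obtain ⟨hBc, hBα, hp2⟩ := pairB p hp
    constructor
    · show p.1 + B p.1 α • α = p.2
      rw [hBα, hp2, neg_smul, one_smul]; abel
    · have hB2 : B p.2 α = 1 := by rw [hp2, B_sub_left]; linarith
      show p.2 + B p.2 α • α = p.1
      rw [hB2, one_smul, hp2]; abel
  · intro y hy hav
    rcases key y ((mem_Yset_iff y).mp hy) with hB | hB | hB
    · exact absurd rfl ((hav (y, y - α) ⟨hy, memY_of y hy hB, by simp⟩).1)
    · exact hsfun y hB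
    · exact absurd rfl ((hav (y + α, y) ⟨memY_of' y hy hB, hy, by simp⟩).2)
  · have hF : {y ∈ Yset | sfun α y = y} = ↑(ylist.toFinset.filter (fun y => B y α = 0)) := by
      ext y
      simp only [Set.mem_setOf_eq, Finset.coe_filter, List.mem_toFinset]
      constructor
      · rintro ⟨hY, hfix⟩
        refine ⟨(mem_Yset_iff y).mp hY, ?_⟩
        have h0 : B y α • α = 0 := by
          have h' : y + B y α • α = y := hfix
          exact add_eq_left.mp h'
        exact smul_zero_of _ _ h0 hα0
      · rintro ⟨hyl, hB⟩
        exact ⟨(mem_Yset_iff y).mpr hyl, hsfun y hB⟩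
    rw [hF, Set.ncard_coe_finset]
    exact cFixn
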